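/- Let A, B ∈ Matrix (Fin n) (Fin n) ℝ and define V : ℝ → Matrix (Fin n) (Fin n) ℝ by V(t) := exp(−tB) · A · exp(tB) + B, where exp is the matrix exponential; V is the left Lie reduction of the pointwise product t ↦ exp(tA)·exp(tB) of the two one-parameter subgroups generated by A and B. Then there exists a constant matrix C with V''(t) = ⁅V'(t), V(t)⁆ + C for all t ∈ ℝ if and only if ⁅⁅⁅B, A⁆, A⁆, B⁆ = 0, where ⁅X, Y⁆ := XY − YX. -/

import Mathlib

noncomputable section

open NormedSpace

namespace Stmt3Aux

lemma alg {R : Type*} [Ring R] (P Q K A B : R) (hQP : Q * P = 1)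
    (hQB : Q * B = B * Q) (hPB : P * B = B * P) :
    ⁅P * K * Q, P * A * Q + B⁆ = P * (K * A - A * K) * Q + P * (K * B - B * K) * Q := by
  have e1 : ∀ X Y : R, P * X * Q * (P * Y * Q) = P * (X * Y) * Q := by
    intro X Y
    calc P*X*Q*(P*Y*Q) = P*X*(Q*P)*(Y*Q) := by noncomm_ring
    _ = P*(X*Y)*Q := by rw [hQP]; noncomm_ring
  have e2 : ∀ X : R, P * X * Q * B = P * (X * B) * Q := by
    intro X
    calc P*X*Q*B = P*X*(Q*B) := by noncomm_ring
    _ = P*(X*B)*Q := by rw [hQB]; noncomm_ring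
  have e3 : ∀ X : R, B * (P * X * Q) = P * (B * X) * Q := by
    intro X
    calc B*(P*X*Q) = (B*P)*(X*Q) := by noncomm_ring
    _ = P*(B*X)*Q := by rw [← hPB]; noncomm_ring
  rw [Ring.lie_def, mul_add, add_mul]; simp only [e1, e2, e3]
  noncomm_ring

section Linfty
attribute [local instance] Matrix.linftyOpNormedRing Matrix.linftyOpNormedAlgebra

theorem conj_hasDerivAt' {n : ℕ} (B X : Matrix (Fin n) (Fin n) ℝ) (t : ℝ) :
    HasDerivAt (fun s : ℝ => exp (-(s • B)) * X * exp (s • B))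
      (exp (-(t • B)) * (X * B - B * X) * exp (t • B)) t := by
  have hneg : ∀ s : ℝ, -(s • B) = (-s) • B := by intro s; rw [neg_smul]
  have h1 : HasDerivAt (fun s : ℝ => exp (s • B)) (exp (t • B) * B) t :=
    hasDerivAt_exp_smul_const B t
  have h2 : HasDerivAt (fun s : ℝ => exp (-(s • B)))
      (-(B * exp (-(t • B)))) t := by
    have hb : HasDerivAt (fun s : ℝ => exp (s • B)) (B * exp ((-t) • B)) (-t) :=
      hasDerivAt_exp_smul_const' B (-t)
    have hn : HasDerivAt (fun s : ℝ => -s) (-1 : ℝ) t := (hasDerivAt_id t).neg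
    have := HasDerivAt.scomp (𝕜 := ℝ) t hb hn
    simp only [Function.comp, hneg] at this ⊢
    exact this.congr_deriv (by simp [neg_smul])
  have h3 := (h2.mul_const X).mul h1
  refine h3.congr_deriv (Eq.symm ?_)
  have hc : B * exp (t • B) = exp (t • B) * B :=
    (((Commute.refl B).smul_right t).exp_right)
  have hc' : B * exp (-(t • B)) = exp (-(t • B)) * B :=
    ((((Commute.refl B).smul_right t).neg_right).exp_right)
  rw [mul_sub, sub_mul, hc', ← hc]
  noncomm_ring

theorem conj_tendsto_slope' {n : ℕ} (B X : Matrix (Fin n) (Fin n) ℝ) (t : ℝ) :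
    Filter.Tendsto (slope (fun s : ℝ => exp (-(s • B)) * X * exp (s • B)) t)
      (nhdsWithin t {t}ᶜ) (nhds (exp (-(t • B)) * (X * B - B * X) * exp (t • B))) :=
  hasDerivAt_iff_tendsto_slope.mp (conj_hasDerivAt' B X t)

end Linfty

attribute [local instance] Matrix.normedAddCommGroup Matrix.normedSpace

theorem conj_hasDerivAt {n : ℕ} (B X : Matrix (Fin n) (Fin n) ℝ) (t : ℝ) :
    HasDerivAt (fun s : ℝ => exp (-(s • B)) * X * exp (s • B))
      (exp (-(t • B)) * (X * B - B * X) * exp (t • B)) t := by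
  exact hasDerivAt_iff_tendsto_slope.mpr (conj_tendsto_slope' B X t)

theorem hEE {n : ℕ} (B : Matrix (Fin n) (Fin n) ℝ) (t : ℝ) :
    exp (-(t • B)) * exp (t • B) = 1 := by
  rw [← Matrix.exp_add_of_commute _ _ ((Commute.refl (t • B)).neg_left)]
  simp [exp_zero]

theorem hEE' {n : ℕ} (B : Matrix (Fin n) (Fin n) ℝ) (t : ℝ) :
    exp (t • B) * exp (-(t • B)) = 1 := by
  rw [← Matrix.exp_add_of_commute _ _ ((Commute.refl (t • B)).neg_right)]
  simp [exp_zero]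

end Stmt3Aux

open Stmt3Aux

attribute [local instance] Matrix.normedAddCommGroup Matrix.normedSpace

/-- The left Lie reduction `V(t) = exp(−tB)·A·exp(tB) + B` of the pointwise product
`t ↦ exp(tA)·exp(tB)` of two one-parameter matrix subgroups is a Lie quadratic, i.e.
satisfies `V'' = ⁅V', V⁆ + C` for some constant matrix `C`, if and only if
`⁅⁅⁅B, A⁆, A⁆, B⁆ = 0`, where `⁅X, Y⁆ = X*Y − Y*X`. -/
theorem stmt_3 {n : ℕ} (A B : Matrix (Fin n) (Fin n) ℝ) :
    (∃ C : Matrix (Fin n) (Fin n) ℝ, ∀ t : ℝ,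
        iteratedDeriv 2
            (fun s : ℝ =>
              NormedSpace.exp (-(s • B)) * A * NormedSpace.exp (s • B) + B) t =
          ⁅deriv
              (fun s : ℝ =>
                NormedSpace.exp (-(s • B)) * A * NormedSpace.exp (s • B) + B) t,
            NormedSpace.exp (-(t • B)) * A * NormedSpace.exp (t • B) + B⁆ + C) ↔
      ⁅⁅⁅B, A⁆, A⁆, B⁆ = 0 := by
  set K : Matrix (Fin n) (Fin n) ℝ := A * B - B * A with hK
  set Dm : Matrix (Fin n) (Fin n) ℝ := K * A - A * K with hDm
  have hV1 : ∀ t : ℝ, deriv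
      (fun s : ℝ => exp (-(s • B)) * A * exp (s • B) + B) t
      = exp (-(t • B)) * K * exp (t • B) := fun t =>
    ((conj_hasDerivAt B A t).add_const B).deriv
  have hV2 : ∀ t : ℝ, iteratedDeriv 2
      (fun s : ℝ => exp (-(s • B)) * A * exp (s • B) + B) t
      = exp (-(t • B)) * (K * B - B * K) * exp (t • B) := by
    intro t
    rw [iteratedDeriv_succ, iteratedDeriv_one]
    show deriv (deriv (fun s : ℝ => exp (-(s • B)) * A * exp (s • B) + B)) t = _
    rw [show deriv (fun s : ℝ => exp (-(s • B)) * A * exp (s • B) + B)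
        = fun s : ℝ => exp (-(s • B)) * K * exp (s • B) from funext hV1]
    exact (conj_hasDerivAt B K t).deriv
  have hkey : ∀ t : ℝ, ⁅exp (-(t • B)) * K * exp (t • B),
        exp (-(t • B)) * A * exp (t • B) + B⁆
      = exp (-(t • B)) * Dm * exp (t • B)
        + exp (-(t • B)) * (K * B - B * K) * exp (t • B) := by
    intro t
    have hQB : exp (t • B) * B = B * exp (t • B) :=
      ((((Commute.refl B).smul_right t).exp_right).symm)
    have hPB : exp (-(t • B)) * B = B * exp (-(t • B)) :=
      (((((Commute.refl B).smul_right t).neg_right).exp_right).symm)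
    exact alg _ _ K A B (hEE' B t) hQB hPB
  have hiff : ⁅⁅⁅B, A⁆, A⁆, B⁆ = 0 ↔ Dm * B - B * Dm = 0 := by
    rw [show ⁅⁅⁅B, A⁆, A⁆, B⁆ = -(Dm * B - B * Dm) from by
      simp only [Ring.lie_def, hDm, hK]; noncomm_ring, neg_eq_zero]
  simp only [hV1, hV2, hkey]
  rw [hiff]
  constructor
  · rintro ⟨C, hC⟩
    have hconst : ∀ t : ℝ, exp (-(t • B)) * Dm * exp (t • B) = -C := by
      intro t
      have h := hC t
      refine eq_neg_of_add_eq_zero_left ?_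
      have h2 : exp (-(t • B)) * (K * B - B * K) * exp (t • B)
          + (exp (-(t • B)) * Dm * exp (t • B) + C)
          = exp (-(t • B)) * (K * B - B * K) * exp (t • B) + 0 := by
        rw [add_zero]
        calc exp (-(t • B)) * (K * B - B * K) * exp (t • B)
            + (exp (-(t • B)) * Dm * exp (t • B) + C)
            = exp (-(t • B)) * Dm * exp (t • B)
              + exp (-(t • B)) * (K * B - B * K) * exp (t • B) + C := by abel
          _ = exp (-(t • B)) * (K * B - B * K) * exp (t • B) := h.symm
      exact add_left_cancel h2
    have h0 := hconst 0
    simp only [zero_smul, neg_zero, exp_zero, one_mul, mul_one] at h0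
    have hconst' : ∀ t : ℝ, exp (-(t • B)) * Dm * exp (t • B) = Dm :=
      fun t => (hconst t).trans h0.symm
    have hder := conj_hasDerivAt B Dm 0
    rw [show (fun s : ℝ => exp (-(s • B)) * Dm * exp (s • B))
        = fun _ : ℝ => Dm from funext hconst'] at hder
    have hz := hder.unique (hasDerivAt_const 0 Dm)
    simp only [zero_smul, neg_zero, exp_zero, one_mul, mul_one] at hz
    exact hz
  · intro h
    have hBD : Commute Dm B := by
      rw [Commute, SemiconjBy, ← sub_eq_zero]
      exact h
    have hconj : ∀ t : ℝ, exp (-(t • B)) * Dm * exp (t • B) = Dm := by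
      intro t
      have hcom : Dm * exp (-(t • B)) = exp (-(t • B)) * Dm :=
        (((hBD.smul_right t).neg_right).exp_right)
      calc exp (-(t • B)) * Dm * exp (t • B)
          = Dm * exp (-(t • B)) * exp (t • B) := by rw [hcom]
        _ = Dm := by rw [mul_assoc, hEE B t, mul_one]
    refine ⟨-Dm, fun t => ?_⟩
    rw [hconj t]
    abel
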